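/- arXiv:2412.03000 — 2 statements merged into one kernel-verified Lean document; each statement's English description precedes it below -/
import Mathlib

section
/- Let p, q be nonnegative integers with either p ≤ q, or p = q + 1. Let a_1,…,a_p be real numbers and let b_1,…,b_q be real numbers none of which is a nonpositive integer, and define F(z) = ∑_{i=0}^{∞} ( (a_1)_i ⋯ (a_p)_i / ((b_1)_i ⋯ (b_q)_i) ) z^i / i!. Let m, n be positive integers and for k = 1,…,2m let x_k = (x_{k,1},…,x_{k,n}) ∈ ℝ^n; if p = q + 1 assume additionally |x_{1,r_1} x_{2,r_2} ⋯ x_{2m,r_{2m}}| < 1 for all indices. Then Det( F(x_{1,r_1} x_{2,r_2} ⋯ x_{2m,r_{2m}}) )_{1≤r_1,…,r_{2m}≤n} = ∑_{i_1 > ⋯ > i_n ≥ 0} ∏_{j=1}^{n} ( (a_1)_{i_j} ⋯ (a_p)_{i_j} / ((b_1)_{i_j} ⋯ (b_q)_{i_j}) ) (1/ i_j!) · ∏_{k=1}^{2m} det( (x_{k,r})^{i_s} )_{1≤r,s≤n}, the sum running over all strictly decreasing n-tuples of nonnegative integers. -/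
set_option maxHeartbeats 2000000

open scoped BigOperators

/-- Cayley's first hyperdeterminant of a real `2m`-dimensional array of size `n`
in each direction. -/
noncomputable def hyperDet (m n : ℕ) (A : (Fin (2 * m) → Fin n) → ℝ) : ℝ :=
  ((n.factorial : ℕ) : ℝ)⁻¹ *
    ∑ σ : Fin (2 * m) → Equiv.Perm (Fin n),
      (∏ k : Fin (2 * m), ((Equiv.Perm.sign (σ k) : ℤ) : ℝ)) *
        ∏ j : Fin n, A (fun k => σ k j)

/-- The classical rising factorial `(a)_i = a(a+1)⋯(a+i-1)`. -/
noncomputable def risingFactorial (a : ℝ) (i : ℕ) : ℝ :=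
  ∏ t ∈ Finset.range i, (a + t)

/-- The classical generalized hypergeometric series
`pFq(a₁,…,a_p; b₁,…,b_q; z) = ∑_{i≥0} ((a₁)_i ⋯ (a_p)_i / ((b₁)_i ⋯ (b_q)_i)) z^i / i!`. -/
noncomputable def pFq (p q : ℕ) (a : Fin p → ℝ) (b : Fin q → ℝ) (z : ℝ) : ℝ :=
  ∑' i : ℕ, ((∏ s : Fin p, risingFactorial (a s) i) / (∏ t : Fin q, risingFactorial (b t) i)) *
    z ^ i / (Nat.factorial i : ℝ)

open Filter Topology

/-- The coefficient of `z^i` in `pFq`. -/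
noncomputable def hgCoeff (p q : ℕ) (a : Fin p → ℝ) (b : Fin q → ℝ) (i : ℕ) : ℝ :=
  ((∏ s : Fin p, risingFactorial (a s) i) / (∏ t : Fin q, risingFactorial (b t) i)) *
    ((Nat.factorial i : ℝ))⁻¹

lemma risingFactorial_succ (a : ℝ) (i : ℕ) :
    risingFactorial a (i + 1) = risingFactorial a i * (a + i) :=
  Finset.prod_range_succ _ _

lemma risingFactorial_ne_zero {a : ℝ} (ha : ∀ j : ℕ, a ≠ -(j : ℝ)) (i : ℕ) :
    risingFactorial a i ≠ 0 :=
  Finset.prod_ne_zero_iff.2 fun j _ h => ha j (by linarith)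

lemma pFq_eq (p q : ℕ) (a : Fin p → ℝ) (b : Fin q → ℝ) (z : ℝ) :
    pFq p q a b z = ∑' i : ℕ, hgCoeff p q a b i * z ^ i := by
  unfold pFq hgCoeff
  refine tsum_congr fun i => ?_
  rw [div_eq_mul_inv, mul_right_comm]

/-- A function `(a+i)/(i+1)` tends to `1`. -/
lemma tendsto_ratio_one (w : ℝ) :
    Tendsto (fun i : ℕ => (w + i) / ((i : ℝ) + 1)) atTop (𝓝 1) := by
  have h0 : Tendsto (fun i : ℕ => (w - 1) / ((i : ℝ) + 1)) atTop (𝓝 0) := by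
    have := (tendsto_const_div_atTop_nhds_zero_nat (w - 1)).comp (tendsto_add_atTop_nat 1)
    simpa [Function.comp_def] using this
  have h1 := h0.add (tendsto_const_nhds (x := (1 : ℝ)) (f := atTop))
  rw [zero_add] at h1
  refine h1.congr fun i => ?_
  have : ((i : ℝ) + 1) ≠ 0 := by positivity
  field_simp
  ring

lemma tendsto_inv_nat_add_one : Tendsto (fun i : ℕ => ((i : ℝ) + 1)⁻¹) atTop (𝓝 0) := by
  simpa [one_div] using (tendsto_one_div_add_atTop_nhds_zero_nat :
    Tendsto (fun i : ℕ => 1 / ((i : ℝ) + 1)) atTop (𝓝 0))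

/-- Summability of the hypergeometric series. -/
lemma summable_hg (p q : ℕ) (hpq : p ≤ q ∨ p = q + 1) (a : Fin p → ℝ) (b : Fin q → ℝ)
    (hb : ∀ t, ∀ i : ℕ, b t ≠ -(i : ℝ)) {z : ℝ} (hz : p = q + 1 → |z| < 1) :
    Summable fun i => hgCoeff p q a b i * z ^ i := by
  have hD : ∀ i : ℕ, (∏ t : Fin q, risingFactorial (b t) i) ≠ 0 :=
    fun i => Finset.prod_ne_zero_iff.2 fun t _ => risingFactorial_ne_zero (hb t) i
  have hB : ∀ i : ℕ, (∏ t : Fin q, (b t + (i : ℝ))) ≠ 0 := by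
    intro i
    refine Finset.prod_ne_zero_iff.2 fun t _ h => hb t i ?_
    linarith
  by_cases hz0 : z = 0
  · refine summable_of_ne_finset_zero (s := Finset.range 1) fun i hi => ?_
    have hi1 : i ≠ 0 := by simpa using hi
    rw [hz0, zero_pow hi1, mul_zero]
  by_cases hall : ∀ i, hgCoeff p q a b i ≠ 0
  · -- ratio test
    have hzero_ne : ∀ i, hgCoeff p q a b i * z ^ i ≠ 0 :=
      fun i => mul_ne_zero (hall i) (pow_ne_zero _ hz0)
    have key : ∀ i : ℕ, hgCoeff p q a b (i + 1) * z ^ (i + 1)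
        = (hgCoeff p q a b i * z ^ i) *
          (z * ((∏ s : Fin p, (a s + (i : ℝ))) / ((∏ t : Fin q, (b t + (i : ℝ))) * ((i : ℝ) + 1)))) := by
      intro i
      have hfact : ((Nat.factorial (i + 1) : ℕ) : ℝ) = (Nat.factorial i : ℝ) * ((i : ℝ) + 1) := by
        push_cast [Nat.factorial_succ]
        ring
      have h1 : ((Nat.factorial i : ℕ) : ℝ) ≠ 0 := by positivity
      have h3 : ((i : ℝ) + 1) ≠ 0 := by positivity
      simp only [hgCoeff, risingFactorial_succ, Finset.prod_mul_distrib, pow_succ, hfact]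
      field_simp
    have hrat : ∀ i : ℕ, ‖hgCoeff p q a b (i + 1) * z ^ (i + 1)‖ / ‖hgCoeff p q a b i * z ^ i‖
        = |z * ((∏ s : Fin p, (a s + (i : ℝ))) /
            ((∏ t : Fin q, (b t + (i : ℝ))) * ((i : ℝ) + 1)))| := by
      intro i
      rw [key i, norm_mul, mul_comm, mul_div_assoc,
        div_self (norm_ne_zero_iff.2 (hzero_ne i)), mul_one, Real.norm_eq_abs]
    have hAlim : Tendsto (fun i : ℕ => ∏ s : Fin p, ((a s + (i : ℝ)) / ((i : ℝ) + 1)))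
        atTop (𝓝 1) := by
      have := tendsto_finset_prod (f := fun (s : Fin p) (i : ℕ) => (a s + (i : ℝ)) / ((i : ℝ) + 1))
        (x := atTop) (a := fun _ => (1 : ℝ)) Finset.univ (fun s _ => tendsto_ratio_one (a s))
      simpa using this
    have hBlim : Tendsto (fun i : ℕ => ∏ t : Fin q, ((b t + (i : ℝ)) / ((i : ℝ) + 1)))
        atTop (𝓝 1) := by
      have := tendsto_finset_prod (f := fun (t : Fin q) (i : ℕ) => (b t + (i : ℝ)) / ((i : ℝ) + 1))
        (x := atTop) (a := fun _ => (1 : ℝ)) Finset.univ (fun t _ => tendsto_ratio_one (b t))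
      simpa using this
    -- algebraic reorganization of the ratio
    have hgeq : ∀ i : ℕ, z * ((∏ s : Fin p, (a s + (i : ℝ))) /
          ((∏ t : Fin q, (b t + (i : ℝ))) * ((i : ℝ) + 1)))
        = z * ((∏ s : Fin p, ((a s + (i : ℝ)) / ((i : ℝ) + 1))) /
            (∏ t : Fin q, ((b t + (i : ℝ)) / ((i : ℝ) + 1))) *
            (((i : ℝ) + 1)⁻¹) ^ (q + 1 - p)) := by
      intro i
      have h3 : ((i : ℝ) + 1) ≠ 0 := by positivity
      have hpow : ((i : ℝ) + 1) ^ p * ((i : ℝ) + 1) ^ (q + 1 - p) = ((i : ℝ) + 1) ^ (q + 1) := by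
        rw [← pow_add]
        congr 1
        omega
      rw [Finset.prod_div_distrib, Finset.prod_div_distrib, Finset.prod_const, Finset.prod_const,
        Finset.card_univ, Fintype.card_fin, Finset.card_univ, Fintype.card_fin]
      congr 1
      have hcomb : (((i : ℝ) + 1) ^ p / ((i : ℝ) + 1) ^ q) * ((i : ℝ) + 1) ^ (q + 1 - p)
          = ((i : ℝ) + 1) := by
        have hpow' : ((i : ℝ) + 1) ^ p * ((i : ℝ) + 1) ^ (q + 1 - p)
            = ((i : ℝ) + 1) * ((i : ℝ) + 1) ^ q := by
          rw [hpow, pow_succ]; ring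
        rw [div_mul_eq_mul_div, hpow', mul_div_assoc,
          div_self (pow_ne_zero q h3), mul_one]
      rw [inv_pow, div_div_div_comm, ← div_eq_mul_inv, div_div, hcomb, ← div_div]
    rcases hpq with hle | heq
    · -- p ≤ q : ratio tends to 0
      have hC : Tendsto (fun i : ℕ => (((i : ℝ) + 1)⁻¹) ^ (q + 1 - p)) atTop (𝓝 0) := by
        have hd : q + 1 - p ≠ 0 := by omega
        simpa [zero_pow hd] using tendsto_inv_nat_add_one.pow (q + 1 - p)
      have hg0 : Tendsto (fun i : ℕ => z * ((∏ s : Fin p, (a s + (i : ℝ))) /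
          ((∏ t : Fin q, (b t + (i : ℝ))) * ((i : ℝ) + 1)))) atTop (𝓝 0) := by
        have := (tendsto_const_nhds (x := z) (f := atTop)).mul
          (((hAlim.div hBlim one_ne_zero).mul hC))
        simp only [div_one, mul_zero, one_mul] at this
        refine this.congr fun i => ?_
        simp only [Pi.div_apply]
        exact (hgeq i).symm
      refine summable_of_ratio_test_tendsto_lt_one one_pos (Eventually.of_forall hzero_ne) ?_
      have := hg0.abs
      rw [abs_zero] at this
      exact this.congr fun i => (hrat i).symm
    · -- p = q + 1 : ratio tends to |z| < 1
      have hd : q + 1 - p = 0 := by omega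
      have hg0 : Tendsto (fun i : ℕ => z * ((∏ s : Fin p, (a s + (i : ℝ))) /
          ((∏ t : Fin q, (b t + (i : ℝ))) * ((i : ℝ) + 1)))) atTop (𝓝 z) := by
        have := (tendsto_const_nhds (x := z) (f := atTop)).mul
          ((hAlim.div hBlim one_ne_zero))
        simp only [div_one, mul_one] at this
        refine this.congr fun i => ?_
        simp only [Pi.div_apply]
        rw [hgeq i, hd, pow_zero, mul_one]
      refine summable_of_ratio_test_tendsto_lt_one (hz heq) (Eventually.of_forall hzero_ne) ?_
      exact hg0.abs.congr fun i => (hrat i).symm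
  · -- a numerator factor eventually vanishes
    push_neg at hall
    obtain ⟨i0, hi0⟩ := hall
    have hN : (∏ s : Fin p, risingFactorial (a s) i0) = 0 := by
      by_contra hN
      exact (mul_ne_zero (div_ne_zero hN (hD i0)) (inv_ne_zero (by positivity))) hi0
    obtain ⟨s0, -, hs0⟩ := Finset.prod_eq_zero_iff.1 hN
    rw [risingFactorial] at hs0
    obtain ⟨j0, hj0, hj0'⟩ := Finset.prod_eq_zero_iff.1 hs0
    rw [Finset.mem_range] at hj0
    refine summable_of_ne_finset_zero (s := Finset.range i0) fun i hi => ?_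
    rw [Finset.mem_range, not_lt] at hi
    have hrf : risingFactorial (a s0) i = 0 := by
      rw [risingFactorial]
      exact Finset.prod_eq_zero (Finset.mem_range.2 (lt_of_lt_of_le hj0 hi)) hj0'
    have : (∏ s : Fin p, risingFactorial (a s) i) = 0 :=
      Finset.prod_eq_zero (Finset.mem_univ s0) hrf
    simp [hgCoeff, this]

/-- Expansion of a finite product of absolutely convergent series as a sum over the pi type. -/
lemma pi_prod_aux (n : ℕ) (S : Fin n → ℕ → ℝ) (h : ∀ j, Summable fun i => |S j i|) :
    Summable (fun f : Fin n → ℕ => |∏ j, S j (f j)|) ∧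
      ∑' f : Fin n → ℕ, ∏ j, S j (f j) = ∏ j, ∑' i, S j i := by
  induction n with
  | zero =>
      constructor
      · refine summable_of_ne_finset_zero (s := {(fun j => j.elim0 : Fin 0 → ℕ)}) fun f hf => ?_
        exact absurd (Finset.mem_singleton.2 (Subsingleton.elim _ _)) hf
      · rw [tsum_eq_single (fun j => j.elim0 : Fin 0 → ℕ)
          (fun f hf => absurd (Subsingleton.elim _ _) hf)]
        simp
  | succ n ih =>
      obtain ⟨ihS, ihT⟩ := ih (fun j => S j.succ) (fun j => h j.succ)
      have hGabs : Summable (fun pr : ℕ × (Fin n → ℕ) =>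
          |S 0 pr.1| * |∏ j : Fin n, S j.succ (pr.2 j)|) :=
        (h 0).mul_of_nonneg ihS (fun _ => abs_nonneg _) (fun _ => abs_nonneg _)
      have hGabs' : Summable (fun pr : ℕ × (Fin n → ℕ) =>
          |S 0 pr.1 * ∏ j : Fin n, S j.succ (pr.2 j)|) :=
        hGabs.congr fun pr => (abs_mul _ _).symm
      have hG : Summable (fun pr : ℕ × (Fin n → ℕ) =>
          S 0 pr.1 * ∏ j : Fin n, S j.succ (pr.2 j)) := hGabs'.of_abs
      let e : (Fin (n + 1) → ℕ) ≃ ℕ × (Fin n → ℕ) :=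
        { toFun := fun f => (f 0, fun j => f j.succ)
          invFun := fun pr => Fin.cons pr.1 pr.2
          left_inv := fun f => Fin.cons_self_tail f
          right_inv := fun pr => by simp }
      constructor
      · refine (e.summable_iff.2 hGabs').congr fun f => ?_
        show |S 0 (f 0) * ∏ j : Fin n, S j.succ (f j.succ)| = _
        rw [Fin.prod_univ_succ]
      · have h1 : ∀ bb : ℕ, Summable fun cc : Fin n → ℕ => S 0 bb * ∏ j : Fin n, S j.succ (cc j) :=
          fun bb => (ihS.of_abs).mul_left _
        calc ∑' f : Fin (n + 1) → ℕ, ∏ j, S j (f j)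
            = ∑' pr : ℕ × (Fin n → ℕ), S 0 pr.1 * ∏ j : Fin n, S j.succ (pr.2 j) := by
              rw [← e.tsum_eq]
              exact tsum_congr fun f => by
                rw [Fin.prod_univ_succ]
                rfl
          _ = ∑' bb : ℕ, ∑' cc : Fin n → ℕ, S 0 bb * ∏ j : Fin n, S j.succ (cc j) :=
              Summable.tsum_prod' hG h1
          _ = ∏ j : Fin (n + 1), ∑' i, S j i := by
              simp_rw [tsum_mul_left, ihT, tsum_mul_right]
              rw [Fin.prod_univ_succ]

/-- Expansion of the hyperdeterminant of the generalized hypergeometric kernel as a sum over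
strictly decreasing tuples of nonnegative integers of products of generalized Vandermonde
determinants. -/
theorem hyperDet_pFq_eq_sum (p q : ℕ) (hpq : p ≤ q ∨ p = q + 1)
    (a : Fin p → ℝ) (b : Fin q → ℝ) (hb : ∀ t, ∀ i : ℕ, b t ≠ -(i : ℝ))
    (m n : ℕ) (hm : 0 < m) (hn : 0 < n)
    (x : Fin (2 * m) → Fin n → ℝ)
    (hlt : p = q + 1 → ∀ r : Fin (2 * m) → Fin n, |∏ k : Fin (2 * m), x k (r k)| < 1) :
    hyperDet m n (fun r => pFq p q a b (∏ k : Fin (2 * m), x k (r k))) =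
      ∑' i : {f : Fin n → ℕ // StrictAnti f},
        (∏ j : Fin n,
          ((∏ s : Fin p, risingFactorial (a s) (i.1 j)) /
            (∏ t : Fin q, risingFactorial (b t) (i.1 j))) * ((Nat.factorial (i.1 j) : ℝ))⁻¹) *
          ∏ k : Fin (2 * m), Matrix.det (Matrix.of fun r s : Fin n => x k r ^ (i.1 s)) := by
  classical
  set c : ℕ → ℝ := hgCoeff p q a b with hcdef
  set V : (Fin n → ℕ) → Fin (2 * m) → ℝ :=
    fun f k => (Matrix.of fun r s : Fin n => x k r ^ f s).det with hV
  set W : (Fin n → ℕ) → ℝ := fun f => (∏ j, c (f j)) * ∏ k, V f k with hW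
  have hsum : ∀ (σ : Fin (2 * m) → Equiv.Perm (Fin n)) (j : Fin n),
      Summable fun i : ℕ => |c i * (∏ k, x k (σ k j)) ^ i| :=
    fun σ j => (summable_hg p q hpq a b hb (fun h => hlt h (fun k => σ k j))).abs
  have hexp : ∀ σ : Fin (2 * m) → Equiv.Perm (Fin n),
      (∏ j : Fin n, pFq p q a b (∏ k, x k (σ k j)))
        = ∑' f : Fin n → ℕ, ∏ j : Fin n, (c (f j) * (∏ k, x k (σ k j)) ^ (f j)) := by
    intro σ
    have haux := (pi_prod_aux n (fun j i => c i * (∏ k, x k (σ k j)) ^ i) (fun j => hsum σ j)).2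
    rw [haux]
    exact Finset.prod_congr rfl fun j _ => pFq_eq p q a b _
  have hsumf : ∀ σ : Fin (2 * m) → Equiv.Perm (Fin n),
      Summable fun f : Fin n → ℕ => ∏ j : Fin n, (c (f j) * (∏ k, x k (σ k j)) ^ (f j)) :=
    fun σ => Summable.of_abs (pi_prod_aux n _ (fun j => hsum σ j)).1
  have hdet : ∀ (f : Fin n → ℕ) (k : Fin (2 * m)), V f k
      = ∑ τ : Equiv.Perm (Fin n), ((Equiv.Perm.sign τ : ℤ) : ℝ) * ∏ j, x k (τ j) ^ f j := by
    intro f k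
    simp [hV, Matrix.det_apply', Matrix.of_apply]
  have hkey : ∀ f : Fin n → ℕ,
      (∑ σ : Fin (2 * m) → Equiv.Perm (Fin n),
        (∏ k, ((Equiv.Perm.sign (σ k) : ℤ) : ℝ)) *
          ∏ j : Fin n, (c (f j) * (∏ k, x k (σ k j)) ^ (f j))) = W f := by
    intro f
    have h1 : ∀ σ : Fin (2 * m) → Equiv.Perm (Fin n),
        (∏ k, ((Equiv.Perm.sign (σ k) : ℤ) : ℝ)) *
            ∏ j, (c (f j) * (∏ k, x k (σ k j)) ^ (f j))
          = (∏ j, c (f j)) *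
            ∏ k, (((Equiv.Perm.sign (σ k) : ℤ) : ℝ) * ∏ j, x k (σ k j) ^ (f j)) := by
      intro σ
      rw [Finset.prod_mul_distrib (f := fun j => c (f j))]
      have h2 : ∏ j : Fin n, (∏ k, x k (σ k j)) ^ (f j)
          = ∏ k : Fin (2 * m), ∏ j : Fin n, x k (σ k j) ^ (f j) := by
        simp_rw [← Finset.prod_pow]
        exact Finset.prod_comm
      rw [h2, Finset.prod_mul_distrib]
      ring
    rw [Finset.sum_congr rfl fun σ _ => h1 σ, ← Finset.mul_sum, hW]
    congr 1
    calc ∑ σ : Fin (2 * m) → Equiv.Perm (Fin n),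
          ∏ k, (((Equiv.Perm.sign (σ k) : ℤ) : ℝ) * ∏ j, x k (σ k j) ^ (f j))
        = ∏ k, ∑ τ : Equiv.Perm (Fin n),
            (((Equiv.Perm.sign τ : ℤ) : ℝ) * ∏ j, x k (τ j) ^ (f j)) :=
          (Fintype.prod_sum (ι := Fin (2 * m)) (κ := fun _ => Equiv.Perm (Fin n))
            (fun k τ => ((Equiv.Perm.sign τ : ℤ) : ℝ) * ∏ j, x k (τ j) ^ (f j))).symm
      _ = ∏ k, V f k := Finset.prod_congr rfl fun k _ => (hdet f k).symm
  have hWsum : Summable W := by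
    have : Summable fun f : Fin n → ℕ => ∑ σ : Fin (2 * m) → Equiv.Perm (Fin n),
        (∏ k, ((Equiv.Perm.sign (σ k) : ℤ) : ℝ)) *
          ∏ j : Fin n, (c (f j) * (∏ k, x k (σ k j)) ^ (f j)) :=
      summable_sum fun σ _ => (hsumf σ).mul_left _
    exact this.congr hkey
  -- unfold hyperDet and expand
  simp only [hyperDet]
  have step1 : ∀ σ : Fin (2 * m) → Equiv.Perm (Fin n),
      (∏ k, ((Equiv.Perm.sign (σ k) : ℤ) : ℝ)) *
          ∏ j : Fin n, pFq p q a b (∏ k, x k (σ k j))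
        = ∑' f : Fin n → ℕ, (∏ k, ((Equiv.Perm.sign (σ k) : ℤ) : ℝ)) *
            ∏ j : Fin n, (c (f j) * (∏ k, x k (σ k j)) ^ (f j)) := by
    intro σ
    rw [hexp σ, tsum_mul_left]
  rw [Finset.sum_congr rfl fun σ _ => step1 σ,
    ← Summable.tsum_finsetSum fun σ _ => (hsumf σ).mul_left _, tsum_congr hkey]
  -- restrict to injective tuples
  have hW0 : ∀ f : Fin n → ℕ, ¬ Function.Injective f → W f = 0 := by
    intro f hf
    simp only [Function.Injective, not_forall] at hf
    obtain ⟨j, j', hjj', hne⟩ := hf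
    have k0 : Fin (2 * m) := ⟨0, by omega⟩
    have hdet0 : V f k0 = 0 :=
      Matrix.det_zero_of_column_eq hne fun r => by simp [hV, hjj']
    simp [hW, Finset.prod_eq_zero (Finset.mem_univ k0) hdet0]
  have hsupp : Function.support W ⊆ Set.range
      (Subtype.val : {f : Fin n → ℕ // Function.Injective f} → (Fin n → ℕ)) := by
    intro f hf
    rw [Subtype.range_coe_subtype, Set.mem_setOf_eq]
    by_contra h
    exact hf (hW0 f h)
  rw [← Function.Injective.tsum_eq (f := W) Subtype.val_injective hsupp]
  -- the bijection between injective tuples and (strictly decreasing tuple, permutation)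
  have hrevsurj : Function.Surjective (Fin.rev : Fin n → Fin n) :=
    fun y => ⟨y.rev, Fin.rev_rev y⟩
  have hrev : ∀ g : Fin n → ℕ, StrictAnti g → StrictMono (fun i : Fin n => g i.rev) :=
    fun g hg i j hij => hg (Fin.rev_lt_rev.mpr hij)
  let E : {g : Fin n → ℕ // StrictAnti g} × Equiv.Perm (Fin n) →
      {f : Fin n → ℕ // Function.Injective f} :=
    fun gp => ⟨gp.1.1 ∘ gp.2, gp.1.2.injective.comp gp.2.injective⟩
  have hEinj : Function.Injective E := by
    rintro ⟨⟨g, hg⟩, π⟩ ⟨⟨g', hg'⟩, π'⟩ hEq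
    have hfun : g ∘ π = g' ∘ π' := congrArg Subtype.val hEq
    have hrange : Set.range g = Set.range g' := by
      have h := congrArg Set.range hfun
      rwa [Set.range_comp, Set.range_comp, Equiv.range_eq_univ, Equiv.range_eq_univ,
        Set.image_univ, Set.image_univ] at h
    have hgg' : g = g' := by
      have h1 := hrev g hg
      have h2 := hrev g' hg'
      have hr : Set.range (fun i : Fin n => g i.rev) = Set.range (fun i : Fin n => g' i.rev) := by
        rw [show (fun i : Fin n => g i.rev) = g ∘ Fin.rev from rfl,
          show (fun i : Fin n => g' i.rev) = g' ∘ Fin.rev from rfl,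
          Set.range_comp, Set.range_comp, hrevsurj.range_eq, Set.image_univ, Set.image_univ,
          hrange]
      haveI : WellFoundedLT (Fin n) := Finite.to_wellFoundedLT
      have := (h1.range_inj h2).1 hr
      funext i
      have := congrFun this i.rev
      simpa [Fin.rev_rev] using this
    have hππ' : π = π' := by
      subst hgg'
      exact Equiv.coe_fn_injective (funext fun s => hg.injective (congrFun hfun s))
    subst hgg' hππ'
    rfl
  have hEsurj : Function.Surjective E := by
    rintro ⟨f, hf⟩
    set σ := Tuple.sort f with hσ
    have hmono : StrictMono (f ∘ σ) :=
      (Tuple.monotone_sort f).strictMono_of_injective (hf.comp σ.injective)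
    refine ⟨⟨⟨fun i => f (σ i.rev), fun i j hij => hmono (Fin.rev_lt_rev.mpr hij)⟩,
      σ.symm.trans (Fin.revPerm)⟩, ?_⟩
    apply Subtype.ext
    funext s
    show f (σ ((Fin.revPerm (σ.symm s)).rev)) = f s
    rw [show Fin.revPerm (σ.symm s) = (σ.symm s).rev from rfl, Fin.rev_rev,
      Equiv.apply_symm_apply]
  let Eqv := Equiv.ofBijective E ⟨hEinj, hEsurj⟩
  rw [← Eqv.tsum_eq (fun fp : {f : Fin n → ℕ // Function.Injective f} => W fp.1)]
  have hWcomp : ∀ gp : {g : Fin n → ℕ // StrictAnti g} × Equiv.Perm (Fin n),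
      W ((Eqv gp).1) = W gp.1.1 := by
    rintro ⟨⟨g, hg⟩, π⟩
    show W (g ∘ π) = W g
    have h1 : (∏ j, c ((g ∘ π) j)) = ∏ j, c (g j) := Equiv.prod_comp π fun j => c (g j)
    have h2 : ∀ k, V (g ∘ π) k = ((Equiv.Perm.sign π : ℤ) : ℝ) * V g k := by
      intro k
      have hsub : (Matrix.of fun r s : Fin n => x k r ^ (g ∘ π) s)
          = (Matrix.of fun r s : Fin n => x k r ^ g s).submatrix id π := rfl
      simp only [hV, hsub, Matrix.det_permute']
    have hsgn : (((Equiv.Perm.sign π : ℤ) : ℝ)) ^ (2 * m) = 1 := by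
      rcases Int.units_eq_one_or (Equiv.Perm.sign π) with h | h <;>
        simp [h, pow_mul]
    simp only [hW, h1, Finset.prod_congr rfl fun k (_ : k ∈ Finset.univ) => h2 k,
      Finset.prod_mul_distrib, Finset.prod_const, Finset.card_univ, Fintype.card_fin, hsgn,
      one_mul]
  rw [tsum_congr hWcomp]
  have hWsub : Summable fun gp : {g : Fin n → ℕ // StrictAnti g} × Equiv.Perm (Fin n) =>
      W gp.1.1 := by
    have h1 : Summable fun fp : {f : Fin n → ℕ // Function.Injective f} => W fp.1 :=
      hWsum.subtype _
    exact ((Eqv.summable_iff (f := fun fp : {f : Fin n → ℕ // Function.Injective f} =>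
      W fp.1)).2 h1).congr hWcomp
  rw [Summable.tsum_prod' hWsub fun gs => Summable.of_finite]
  have hinner : ∀ gs : {g : Fin n → ℕ // StrictAnti g},
      (∑' _ : Equiv.Perm (Fin n), W gs.1) = ((n.factorial : ℕ) : ℝ) * W gs.1 := by
    intro gs
    rw [tsum_fintype, Finset.sum_const, Finset.card_univ, Fintype.card_perm, Fintype.card_fin,
      nsmul_eq_mul]
  rw [tsum_congr hinner, tsum_mul_left, ← mul_assoc,
    inv_mul_cancel₀ (Nat.cast_ne_zero.2 n.factorial_ne_zero), one_mul]
  exact tsum_congr fun gs => by simp only [hW, hV, hcdef, hgCoeff]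
end

section
/- Let m, n be positive integers and for k = 1,…,2m let x_k = (x_{k,1},…,x_{k,n}) ∈ ℝ^n satisfy x_{k,1} > ⋯ > x_{k,n} ≥ 0, with at least all coordinates nonnegative. Then the hyperdeterminant of the array A(r_1,…,r_{2m}) = exp(x_{1,r_1} x_{2,r_2} ⋯ x_{2m,r_{2m}}) satisfies Det(A) = (∏_{k=1}^{2m} V(x_k)) · ∑_λ (∏_{j=1}^{n} 1/(λ_j + n − j)!) ∏_{k=1}^{2m} s_λ(x_k), every summand on the right-hand side is nonnegative, and the sum is strictly positive; consequently Det(A) > 0. -/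
open scoped BigOperators

/-- The Vandermonde product `V(x) = ∏_{r < s} (x_r - x_s)`. -/
noncomputable def vandermonde (n : ℕ) (x : Fin n → ℝ) : ℝ :=
  ∏ r : Fin n, ∏ s ∈ Finset.Ioi r, (x r - x s)

/-- The Schur function `s_λ(x)`, for a partition `λ` given as an antitone function
`Fin n → ℕ`, with exponents `λ_s + n - s` in one-based indexing. -/
noncomputable def schur (n : ℕ) (lam : Fin n → ℕ) (x : Fin n → ℝ) : ℝ :=
  Matrix.det (Matrix.of fun r s : Fin n => x r ^ (lam s + (n - 1 - (s : ℕ)))) /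
    vandermonde n x


open Finset in
lemma sum_rpow_roots_zero :
    ∀ (N : ℕ) (ι : Type) (_ : Fintype ι) (c μ : ι → ℝ), Fintype.card ι ≤ N →
      Function.Injective μ →
      ∀ Z : Finset ℝ, (∀ t ∈ Z, 0 < t) → (∀ t ∈ Z, ∑ j, c j * t ^ μ j = 0) →
      Fintype.card ι ≤ Z.card → c = 0 := by
  intro N
  induction N with
  | zero =>
    intro ι inst c μ hcard _ _ _ _ _
    have : IsEmpty ι := Fintype.card_eq_zero_iff.mp (Nat.le_antisymm hcard (Nat.zero_le _))
    exact funext fun j => isEmptyElim j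
  | succ N ih =>
    intro ι inst c μ hcard hμ Z hZpos hZroot hZcard
    classical
    cases isEmpty_or_nonempty ι with
    | inl h => exact funext fun j => isEmptyElim j
    | inr h =>
    obtain ⟨j₀, -, hj₀⟩ := Finset.exists_min_image Finset.univ μ ⟨Classical.arbitrary ι, Finset.mem_univ _⟩
    set ν : ι → ℝ := fun j => μ j - μ j₀ with hν
    set g : ℝ → ℝ := fun t => ∑ j, c j * t ^ ν j with hg
    have hg0 : ∀ t ∈ Z, g t = 0 := by
      intro t ht
      have htpos := hZpos t ht
      have : g t = (∑ j, c j * t ^ μ j) / t ^ μ j₀ := by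
        rw [Finset.sum_div]
        refine Finset.sum_congr rfl fun j _ => ?_
        show c j * t ^ (μ j - μ j₀) = c j * t ^ μ j / t ^ μ j₀
        rw [Real.rpow_sub htpos]
        ring
      rw [this, hZroot t ht, zero_div]
    have hderiv : ∀ t : ℝ, 0 < t →
        HasDerivAt g (∑ j, (c j * ν j) * t ^ (ν j - 1)) t := by
      intro t ht
      have : HasDerivAt g (∑ j, c j * (ν j * t ^ (ν j - 1))) t :=
        HasDerivAt.fun_sum fun j _ =>
          ((Real.hasDerivAt_rpow_const (p := ν j) (Or.inl ht.ne'))).const_mul (c j)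
      convert this using 1
      exact Finset.sum_congr rfl fun j _ => by ring
    set L := Z.sort (· ≤ ·) with hL
    have hLlen : L.length = Z.card := Finset.length_sort _
    have hLsort : L.SortedLT := Z.sortedLT_sort
    have hLmem : ∀ (i : ℕ) (h : i < L.length), L.get ⟨i, h⟩ ∈ Z := by
      intro i h
      have h2 : L.get ⟨i, h⟩ ∈ L := L.get_mem _
      exact (Finset.mem_sort _).mp h2
    have key : ∀ (i : ℕ) (h1 : i + 1 < L.length),
        ∃ ξ, ξ ∈ Set.Ioo (L.get ⟨i, by omega⟩) (L.get ⟨i + 1, h1⟩) ∧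
          ∑ j, (c j * ν j) * ξ ^ (ν j - 1) = 0 := by
      intro i h1
      set a := L.get ⟨i, by omega⟩ with ha'
      set b := L.get ⟨i + 1, h1⟩ with hb'
      have hab : a < b := hLsort.strictMono_get (by simp [Fin.mk_lt_mk])
      have hapos : 0 < a := hZpos _ (hLmem i (by omega))
      have hcont : ContinuousOn g (Set.Icc a b) := fun t ht =>
        ((hderiv t (lt_of_lt_of_le hapos ht.1)).continuousAt.continuousWithinAt)
      obtain ⟨ξ, hξ, hξ0⟩ := exists_deriv_eq_zero hab hcont
        (by rw [hg0 a (hLmem i (by omega)), hg0 b (hLmem (i+1) h1)])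
      refine ⟨ξ, hξ, ?_⟩
      have hξpos : 0 < ξ := hapos.trans hξ.1
      rw [(hderiv ξ hξpos).deriv] at hξ0
      exact hξ0
    choose ξ hξmem hξzero using key
    have hl : Fintype.card ι ≤ L.length := by omega
    have hcard1 : 1 ≤ Fintype.card ι := Fintype.card_pos
    set f : Fin (L.length - 1) → ℝ := fun i => ξ i (by omega) with hf
    have hfmono : StrictMono f := by
      intro i i' hii'
      have h1 := (hξmem (i : ℕ) (by omega)).2
      have h2 := (hξmem (i' : ℕ) (by omega)).1
      have h3 : L.get ⟨(i : ℕ) + 1, by omega⟩ ≤ L.get ⟨(i' : ℕ), by omega⟩ := by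
        rcases eq_or_lt_of_le (show (i : ℕ) + 1 ≤ (i' : ℕ) from hii') with heq | hlt
        · exact le_of_eq (by congr 1; exact Fin.ext heq)
        · exact (hLsort.strictMono_get (show (⟨(i:ℕ)+1, by omega⟩ : Fin L.length) < ⟨(i':ℕ), by omega⟩ from by simp [Fin.mk_lt_mk, hlt])).le
      calc f i < L.get ⟨(i : ℕ) + 1, by omega⟩ := h1
        _ ≤ L.get ⟨(i' : ℕ), by omega⟩ := h3
        _ < f i' := h2
    set Z' : Finset ℝ := Finset.image f Finset.univ with hZ'
    have hZ'card : Z'.card = L.length - 1 := by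
      rw [hZ', Finset.card_image_of_injective _ hfmono.injective, Finset.card_univ,
        Fintype.card_fin]
    have hZ'pos : ∀ t ∈ Z', 0 < t := by
      intro t ht
      rw [hZ', Finset.mem_image] at ht
      obtain ⟨i, -, rfl⟩ := ht
      have h2 := (hξmem (i : ℕ) (by omega)).1
      exact (hZpos _ (hLmem (i : ℕ) (by omega))).trans h2
    have hsubsum : ∀ t : ℝ, (∑ j, (c j * ν j) * t ^ (ν j - 1)) =
        ∑ j : {j : ι // j ≠ j₀}, (c j.1 * ν j.1) * t ^ (ν j.1 - 1) := by
      intro t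
      rw [← Finset.sum_subtype (Finset.univ.erase j₀)
        (fun x => by simp [Finset.mem_erase]) (fun j => (c j * ν j) * t ^ (ν j - 1))]
      rw [← Finset.sum_erase_add Finset.univ _ (Finset.mem_univ j₀)]
      have : ν j₀ = 0 := by simp [hν]
      simp [this]
    have hZ'root : ∀ t ∈ Z', ∑ j : {j : ι // j ≠ j₀}, (c j.1 * ν j.1) * t ^ (ν j.1 - 1) = 0 := by
      intro t ht
      rw [hZ', Finset.mem_image] at ht
      obtain ⟨i, -, rfl⟩ := ht
      rw [← hsubsum]
      exact hξzero (i : ℕ) (by omega)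
    have hι'card : Fintype.card {j : ι // j ≠ j₀} = Fintype.card ι - 1 := by
      have : Fintype.card {j : ι // ¬ (j = j₀)} = Fintype.card ι - 1 := by
        rw [Fintype.card_subtype_compl, Fintype.card_subtype_eq]
      simp only [ne_eq] at this ⊢; exact this
    have hν' : Function.Injective (fun j : {j : ι // j ≠ j₀} => ν j.1 - 1) := by
      intro a b hab
      simp only [hν, sub_left_inj] at hab
      exact Subtype.ext (hμ hab)
    have hc' := ih {j : ι // j ≠ j₀} inferInstance
      (fun j => c j.1 * ν j.1) (fun j => ν j.1 - 1)
      (by omega) hν' Z' hZ'pos hZ'root (by omega)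
    have hcne : ∀ j : ι, j ≠ j₀ → c j = 0 := by
      intro j hj
      have := congrFun hc' ⟨j, hj⟩
      simp only [Pi.zero_apply] at this
      have hνne : ν j ≠ 0 := by
        simp only [hν, sub_ne_zero]
        exact fun hh => hj (hμ hh)
      rcases mul_eq_zero.mp this with h | h
      · exact h
      · exact absurd h hνne
    have hZne : Z.Nonempty := Finset.card_pos.mp (by omega)
    obtain ⟨t₀, ht₀⟩ := hZne
    have := hZroot t₀ ht₀
    rw [Finset.sum_eq_single j₀ (fun j _ hj => by rw [hcne j hj]; ring)
      (fun hj => absurd (Finset.mem_univ j₀) hj)] at this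
    have ht₀pos := hZpos t₀ ht₀
    have : c j₀ = 0 := by
      have hp : (0:ℝ) < t₀ ^ μ j₀ := Real.rpow_pos_of_pos ht₀pos _
      exact (mul_eq_zero.mp this).resolve_right hp.ne'
    funext j
    by_cases hj : j = j₀
    · rw [hj]; exact this
    · exact hcne j hj



lemma prod_pairs_rev (n : ℕ) (F : Fin n → Fin n → ℝ) :
    (∏ i : Fin n, ∏ j ∈ Finset.Ioi i, F (Fin.rev j) (Fin.rev i))
      = ∏ i : Fin n, ∏ j ∈ Finset.Ioi i, F i j := by
  rw [Finset.prod_sigma', Finset.prod_sigma']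
  refine Finset.prod_bij' (fun p _ => ⟨p.2.rev, p.1.rev⟩) (fun p _ => ⟨p.2.rev, p.1.rev⟩)
    ?_ ?_ ?_ ?_ ?_
  · intro p hp
    simp only [Finset.mem_sigma, Finset.mem_univ, Finset.mem_Ioi, true_and] at hp ⊢
    exact Fin.rev_lt_rev.mpr hp
  · intro p hp
    simp only [Finset.mem_sigma, Finset.mem_univ, Finset.mem_Ioi, true_and] at hp ⊢
    exact Fin.rev_lt_rev.mpr hp
  · intro p hp; simp [Fin.rev_rev]
  · intro p hp; simp [Fin.rev_rev]
  · intro p hp; simp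

lemma det_pow_rev (n : ℕ) (x : Fin n → ℝ) :
    Matrix.det (Matrix.of fun r s : Fin n => x r ^ (n - 1 - (s : ℕ))) = vandermonde n x := by
  set B : Matrix (Fin n) (Fin n) ℝ := Matrix.of fun r s : Fin n => x r ^ (n - 1 - (s : ℕ)) with hB
  have h1 : B.det = (B.submatrix (Fin.revPerm : Fin n ≃ Fin n) Fin.revPerm).det :=
    (Matrix.det_submatrix_equiv_self _ _).symm
  have h2 : B.submatrix (Fin.revPerm : Fin n ≃ Fin n) Fin.revPerm
      = Matrix.vandermonde (fun i => x (Fin.rev i)) := by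
    ext r s
    simp only [Matrix.submatrix_apply, hB, Matrix.of_apply, Matrix.vandermonde_apply,
      Fin.revPerm_apply]
    congr 1
    rw [Fin.val_rev]
    omega
  rw [h1, h2, Matrix.det_vandermonde]
  have h3 : ∀ i j : Fin n, x (Fin.rev j) - x (Fin.rev i)
      = (fun a b => x a - x b) (Fin.rev j) (Fin.rev i) := fun _ _ => rfl
  calc (∏ i : Fin n, ∏ j ∈ Finset.Ioi i, (x (Fin.rev j) - x (Fin.rev i)))
      = ∏ i : Fin n, ∏ j ∈ Finset.Ioi i, (x i - x j) :=
        prod_pairs_rev n (fun a b => x a - x b)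
    _ = vandermonde n x := rfl

lemma vandermonde_pos {n : ℕ} (x : Fin n → ℝ) (hx : StrictAnti x) : 0 < vandermonde n x :=
  Finset.prod_pos fun r _ => Finset.prod_pos fun s hs =>
    sub_pos.mpr (hx (Finset.mem_Ioi.mp hs))

lemma gvdF_ne_zero (n : ℕ) (x μ : Fin n → ℝ) (hx : Function.Injective x)
    (hxpos : ∀ r, 0 < x r) (hμ : Function.Injective μ) :
    Matrix.det (Matrix.of fun r s : Fin n => x r ^ μ s) ≠ 0 := by
  intro hdet
  obtain ⟨v, hv0, hv⟩ := (Matrix.exists_mulVec_eq_zero_iff).mpr hdet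
  have hroots : ∀ t ∈ Finset.image x Finset.univ, ∑ s, v s * t ^ μ s = 0 := by
    intro t ht
    obtain ⟨r, -, rfl⟩ := Finset.mem_image.mp ht
    have h0 := congrFun hv r
    simp only [Matrix.mulVec, dotProduct, Matrix.of_apply, Pi.zero_apply] at h0
    rw [← h0]
    exact Finset.sum_congr rfl fun s _ => mul_comm _ _
  have hcard : Fintype.card (Fin n) ≤ (Finset.image x Finset.univ).card := by
    rw [Finset.card_image_of_injective _ hx]; simp
  have hz := sum_rpow_roots_zero n (Fin n) inferInstance v μ (by simp) hμ _
    (fun t ht => by obtain ⟨r, -, rfl⟩ := Finset.mem_image.mp ht; exact hxpos r) hroots hcard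
  exact hv0 hz

lemma gvdF_pos (n : ℕ) (x μ : Fin n → ℝ) (hx : StrictAnti x) (hxpos : ∀ r, 0 < x r)
    (hμ : StrictAnti μ) : 0 < Matrix.det (Matrix.of fun r s : Fin n => x r ^ μ s) := by
  classical
  set S : Set ((Fin n → ℝ) × (Fin n → ℝ)) :=
    {p | StrictAnti p.1 ∧ (∀ j, 0 < p.1 j) ∧ StrictAnti p.2} with hS
  set F : ((Fin n → ℝ) × (Fin n → ℝ)) → ℝ :=
    fun p => Matrix.det (Matrix.of fun r s : Fin n => p.1 r ^ p.2 s) with hF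
  have hanti_combo : ∀ (a b : ℝ), 0 ≤ a → 0 ≤ b → a + b = 1 →
      ∀ (u v : Fin n → ℝ), StrictAnti u → StrictAnti v → StrictAnti (a • u + b • v) := by
    intro a b ha hb hab u v hu hv i j hij
    simp only [Pi.add_apply, Pi.smul_apply, smul_eq_mul]
    rcases eq_or_lt_of_le ha with ha0 | ha0
    · have hb1 : b = 1 := by linarith
      rw [← ha0, hb1]
      simpa using hv hij
    · have h1 : a * u j < a * u i := by exact mul_lt_mul_of_pos_left (hu hij) ha0
      have h2 : b * v j ≤ b * v i := mul_le_mul_of_nonneg_left (hv hij).le hb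
      linarith
  have hconv : Convex ℝ S := by
    intro p hp q hq a b ha hb hab
    refine ⟨hanti_combo a b ha hb hab _ _ hp.1 hq.1, ?_, ?_⟩
    · intro j
      have hrfl : (a • p + b • q).1 j = a * p.1 j + b * q.1 j := rfl
      rw [hrfl]
      rcases eq_or_lt_of_le ha with ha0 | ha0
      · have hb1 : b = 1 := by linarith
        rw [← ha0, hb1]
        simpa using hq.2.1 j
      · have := hq.2.1 j
        have := hp.2.1 j
        nlinarith
    · exact hanti_combo a b ha hb hab _ _ hp.2.2 hq.2.2
  have hcont : ContinuousOn F S := by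
    have hdet : Continuous fun M : Matrix (Fin n) (Fin n) ℝ => M.det :=
      Continuous.matrix_det continuous_id
    refine hdet.comp_continuousOn ?_
    refine continuousOn_pi.mpr fun r => continuousOn_pi.mpr fun s => ?_
    intro p hp
    have h1 : ContinuousAt (fun q : ℝ × ℝ => q.1 ^ q.2) (p.1 r, p.2 s) :=
      Real.continuousAt_rpow _ (Or.inl (hp.2.1 r).ne')
    have h2 : Continuous (fun p : (Fin n → ℝ) × (Fin n → ℝ) => (p.1 r, p.2 s)) := by fun_prop
    have h3 : ContinuousAt (fun p : (Fin n → ℝ) × (Fin n → ℝ) => p.1 r ^ p.2 s) p :=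
      ContinuousAt.rpow (by fun_prop) (by fun_prop) (Or.inl (hp.2.1 r).ne')
    exact h3.continuousWithinAt
  have hne : ∀ p ∈ S, F p ≠ 0 := fun p hp =>
    gvdF_ne_zero n p.1 p.2 hp.1.injective hp.2.1 hp.2.2.injective
  set p₀ : (Fin n → ℝ) × (Fin n → ℝ) :=
    (fun j => (n : ℝ) - (j : ℕ), fun s => ((n - 1 - (s : ℕ) : ℕ) : ℝ)) with hp₀
  have hp₀S : p₀ ∈ S := by
    refine ⟨?_, ?_, ?_⟩
    · intro i j hij
      simp only [hp₀]
      have : ((i : ℕ) : ℝ) < ((j : ℕ) : ℝ) := by exact_mod_cast hij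
      linarith
    · intro j
      simp only [hp₀]
      have : ((j : ℕ) : ℝ) < (n : ℝ) := by exact_mod_cast j.isLt
      linarith
    · intro i j hij
      simp only [hp₀]
      have h1 : (n - 1 - (j : ℕ)) < (n - 1 - (i : ℕ)) := by
        have := j.isLt; have := i.isLt
        have hij' : (i : ℕ) < (j : ℕ) := hij
        omega
      exact_mod_cast h1
  have hFp₀ : 0 < F p₀ := by
    have : F p₀ = Matrix.det (Matrix.of fun r s : Fin n => p₀.1 r ^ (n - 1 - (s : ℕ))) := by
      simp only [hF]
      congr 1
      ext r s
      simp only [Matrix.of_apply]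
      exact Real.rpow_natCast _ _
    rw [this, det_pow_rev]
    refine vandermonde_pos _ ?_
    intro i j hij
    simp only [hp₀]
    have : ((i : ℕ) : ℝ) < ((j : ℕ) : ℝ) := by exact_mod_cast hij
    linarith
  have hxμS : (x, μ) ∈ S := ⟨hx, hxpos, hμ⟩
  by_contra hneg
  push_neg at hneg
  have hlt : F (x, μ) < 0 := lt_of_le_of_ne hneg (hne _ hxμS)
  have himg : IsPreconnected (F '' S) := (hconv.isPreconnected).image F hcont
  have h0mem : (0 : ℝ) ∈ F '' S := by
    have hsub := himg.Icc_subset (Set.mem_image_of_mem F hxμS) (Set.mem_image_of_mem F hp₀S)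
    exact hsub ⟨hlt.le, hFp₀.le⟩
  obtain ⟨p, hpS, hp0⟩ := h0mem
  exact hne p hpS hp0

lemma gvd_nat_pos (n : ℕ) (x : Fin n → ℝ) (μ : Fin n → ℕ) (hx : StrictAnti x)
    (hxpos : ∀ r, 0 < x r) (hμ : StrictAnti μ) :
    0 < Matrix.det (Matrix.of fun r s : Fin n => x r ^ μ s) := by
  have h := gvdF_pos n x (fun s => (μ s : ℝ)) hx hxpos
    (fun a b hab => by dsimp only; exact_mod_cast hμ hab)
  have heq : (Matrix.of fun r s : Fin n => x r ^ ((μ s : ℕ) : ℝ))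
      = Matrix.of fun r s : Fin n => x r ^ μ s := by
    ext r s
    simp only [Matrix.of_apply]
    exact Real.rpow_natCast _ _
  rwa [heq] at h

lemma gvd_nat_nonneg (n : ℕ) (x : Fin n → ℝ) (μ : Fin n → ℕ) (hx : StrictAnti x)
    (hxnn : ∀ r, 0 ≤ x r) (hμ : StrictAnti μ) :
    0 ≤ Matrix.det (Matrix.of fun r s : Fin n => x r ^ μ s) := by
  set h : ℝ → ℝ := fun ε => Matrix.det (Matrix.of fun r s : Fin n => (x r + ε) ^ μ s) with hh
  have hc : Continuous h := by
    apply Continuous.matrix_det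
    apply continuous_pi; intro r; apply continuous_pi; intro s
    show Continuous fun ε : ℝ => (x r + ε) ^ μ s
    fun_prop
  have hpos : ∀ ε : ℝ, 0 < ε → 0 < h ε := by
    intro ε hε
    exact gvd_nat_pos n (fun r => x r + ε) μ
      (fun a b hab => by have := hx hab; dsimp; linarith)
      (fun r => by have := hxnn r; positivity) hμ
  have htend : Filter.Tendsto h (nhdsWithin 0 (Set.Ioi 0)) (nhds (h 0)) :=
    (hc.tendsto 0).mono_left nhdsWithin_le_nhds
  have h0 : 0 ≤ h 0 := ge_of_tendsto htend
    (Filter.eventually_iff_exists_mem.mpr ⟨Set.Ioi 0, self_mem_nhdsWithin,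
      fun ε hε => (hpos ε hε).le⟩)
  have : h 0 = Matrix.det (Matrix.of fun r s : Fin n => x r ^ μ s) := by
    simp only [hh, add_zero]
  rwa [this] at h0

lemma exponent_strictAnti {n : ℕ} (lam : Fin n → ℕ) (hlam : Antitone lam) :
    StrictAnti fun s : Fin n => lam s + (n - 1 - (s : ℕ)) := by
  intro s s' hss'
  have h1 : lam s' ≤ lam s := hlam hss'.le
  have h2 : (n - 1 - (s' : ℕ)) < (n - 1 - (s : ℕ)) := by
    have := s'.isLt; have hss : (s : ℕ) < (s' : ℕ) := hss'
    omega
  show lam s' + (n - 1 - (s' : ℕ)) < lam s + (n - 1 - (s : ℕ))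
  omega

lemma schur_nonneg {n : ℕ} (lam : Fin n → ℕ) (hlam : Antitone lam) (x : Fin n → ℝ)
    (hx : StrictAnti x) (hxnn : ∀ r, 0 ≤ x r) : 0 ≤ schur n lam x :=
  div_nonneg (gvd_nat_nonneg n x _ hx hxnn (exponent_strictAnti lam hlam))
    (vandermonde_pos x hx).le

lemma schur_zero {n : ℕ} (x : Fin n → ℝ) (hx : StrictAnti x) :
    schur n (fun _ => 0) x = 1 := by
  unfold schur
  simp only [zero_add]
  rw [det_pow_rev]
  exact div_self (vandermonde_pos x hx).ne'

lemma exp_tsum (c : ℝ) : (∑' t : ℕ, c ^ t / (t.factorial : ℝ)) = Real.exp c := by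
  rw [Real.exp_eq_exp_ℝ, NormedSpace.exp_eq_tsum_div]

lemma pi_prod_summable_tsum :
    ∀ (p : ℕ) (f : Fin p → ℕ → ℝ), (∀ j t, 0 ≤ f j t) → (∀ j, Summable (f j)) →
      Summable (fun t : Fin p → ℕ => ∏ j, f j (t j)) ∧
        (∑' t : Fin p → ℕ, ∏ j, f j (t j)) = ∏ j, ∑' t, f j t := by
  intro p
  induction p with
  | zero =>
    intro f _ _
    refine ⟨(hasSum_fintype _).summable, ?_⟩
    rw [tsum_fintype]
    simp
  | succ p ih =>
    intro f hnn hs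
    obtain ⟨ihS, ihT⟩ := ih (fun j => f j.succ) (fun j t => hnn _ _) (fun j => hs _)
    set g : (Fin p → ℕ) → ℝ := fun t => ∏ j, f j.succ (t j) with hg
    have hgnn : ∀ t, 0 ≤ g t := fun t => Finset.prod_nonneg fun j _ => hnn _ _
    have hf0norm : Summable fun t : ℕ => ‖f 0 t‖ :=
      (hs 0).congr fun t => (Real.norm_of_nonneg (hnn 0 t)).symm
    have hgnorm : Summable fun t => ‖g t‖ :=
      ihS.congr fun t => (Real.norm_of_nonneg (hgnn t)).symm
    have hprod : Summable fun z : ℕ × (Fin p → ℕ) => f 0 z.1 * g z.2 :=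
      summable_mul_of_summable_norm hf0norm hgnorm
    have htsum : ((∑' t, f 0 t) * ∑' t, g t) = ∑' z : ℕ × (Fin p → ℕ), f 0 z.1 * g z.2 :=
      tsum_mul_tsum_of_summable_norm hf0norm hgnorm
    set e : (ℕ × (Fin p → ℕ)) ≃ (Fin (p + 1) → ℕ) := Fin.consEquiv (fun _ : Fin (p+1) => ℕ)
    have hcomp : ∀ z : ℕ × (Fin p → ℕ),
        (∏ j : Fin (p+1), f j ((e z) j)) = f 0 z.1 * g z.2 := by
      intro z
      rw [Fin.prod_univ_succ]
      congr 1
    constructor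
    · refine e.summable_iff.mp ?_
      exact hprod.congr fun z => (hcomp z).symm
    · calc (∑' t : Fin (p+1) → ℕ, ∏ j, f j (t j))
          = ∑' z : ℕ × (Fin p → ℕ), ∏ j : Fin (p+1), f j ((e z) j) :=
            (e.tsum_eq (fun t => ∏ j, f j (t j))).symm
        _ = ∑' z : ℕ × (Fin p → ℕ), f 0 z.1 * g z.2 := tsum_congr hcomp
        _ = (∑' t, f 0 t) * ∑' t, g t := htsum.symm
        _ = ∏ j : Fin (p+1), ∑' t, f j t := by rw [Fin.prod_univ_succ, ihT]

lemma strictAnti_fin_step {n : ℕ} {s : Fin n → ℕ} (hs : StrictAnti s) :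
    ∀ (d : ℕ) (a b : Fin n), (b : ℕ) = (a : ℕ) + d → s b + d ≤ s a := by
  intro d
  induction d with
  | zero =>
    intro a b hab
    have : a = b := Fin.ext (by omega)
    subst this
    omega
  | succ d ihd =>
    intro a b hab
    have hb' : (a : ℕ) + d < n := by have := b.isLt; omega
    have h1 := ihd a ⟨(a : ℕ) + d, hb'⟩ rfl
    have h2 : s b < s ⟨(a : ℕ) + d, hb'⟩ := by
      apply hs
      rw [Fin.lt_def]
      simp only
      omega
    omega

lemma strictAnti_fin_ge {n : ℕ} {s : Fin n → ℕ} (hs : StrictAnti s) (j : Fin n) :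
    n - 1 - (j : ℕ) ≤ s j := by
  have hn : 0 < n := j.pos
  have hlast : ((⟨n - 1, by omega⟩ : Fin n) : ℕ) = (j : ℕ) + (n - 1 - (j : ℕ)) := by
    have := j.isLt; simp only; omega
  have := strictAnti_fin_step hs (n - 1 - (j : ℕ)) j ⟨n - 1, by omega⟩ hlast
  omega

lemma strictAnti_comp_perm {n : ℕ} {s s' : Fin n → ℕ} (π : Equiv.Perm (Fin n))
    (hs : StrictAnti s) (hs' : StrictAnti s') (h : ∀ j, s j = s' (π j)) : s = s' := by
  classical
  set u : Fin n → ℕ := fun i => s (Fin.rev i) with hu'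
  set u' : Fin n → ℕ := fun i => s' (Fin.rev i) with hu''
  have hu : StrictMono u := fun i j hij => hs (Fin.rev_lt_rev.mpr hij)
  have hu2 : StrictMono u' := fun i j hij => hs' (Fin.rev_lt_rev.mpr hij)
  set A : Finset ℕ := Finset.image u Finset.univ with hA
  have himg : A = Finset.image u' Finset.univ := by
    ext y
    simp only [hA, Finset.mem_image, Finset.mem_univ, true_and, hu', hu'']
    constructor
    · rintro ⟨i, rfl⟩
      exact ⟨Fin.rev (π (Fin.rev i)), by rw [Fin.rev_rev, ← h]⟩
    · rintro ⟨i, rfl⟩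
      refine ⟨Fin.rev (π.symm (Fin.rev i)), ?_⟩
      rw [Fin.rev_rev, h, Equiv.apply_symm_apply]
  have hcard : A.card = n := by
    rw [hA, Finset.card_image_of_injective _ hu.injective, Finset.card_univ, Fintype.card_fin]
  have e1 : u = A.orderEmbOfFin hcard :=
    Finset.orderEmbOfFin_unique hcard
      (fun i => Finset.mem_image_of_mem u (Finset.mem_univ i)) hu
  have e2 : u' = A.orderEmbOfFin hcard :=
    Finset.orderEmbOfFin_unique hcard
      (fun i => by rw [himg]; exact Finset.mem_image_of_mem u' (Finset.mem_univ i)) hu2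
  have huu : u = u' := e1.trans e2.symm
  funext j
  have : u (Fin.rev j) = u' (Fin.rev j) := by rw [huu]
  simpa [hu', hu'', Fin.rev_rev] using this


section HyperAux

variable (m n : ℕ) (x : Fin (2 * m) → Fin n → ℝ)

/-- Generalized Vandermonde determinant for the `k`-th vector with exponents `t`. -/
noncomputable def Dmat (k : Fin (2 * m)) (t : Fin n → ℕ) : ℝ :=
  Matrix.det (Matrix.of fun r j : Fin n => x k r ^ t j)

/-- Summand of the `t`-expansion of the hyperdeterminant. -/
noncomputable def Gfun (t : Fin n → ℕ) : ℝ :=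
  (∏ j, (((t j).factorial : ℕ) : ℝ))⁻¹ * ∏ k, Dmat m n x k t

/-- Term of the multi-exponential expansion. -/
noncomputable def Wfun (σ : Fin (2 * m) → Equiv.Perm (Fin n)) (t : Fin n → ℕ) : ℝ :=
  ∏ j, ((∏ k, x k (σ k j)) ^ (t j) / (((t j).factorial : ℕ) : ℝ))

/-- The strictly decreasing exponent tuple attached to a partition. -/
def sfun (l : Fin n → ℕ) : Fin n → ℕ := fun j => l j + (n - 1 - (j : ℕ))

lemma Wsum (hnonneg : ∀ k j, 0 ≤ x k j) (σ : Fin (2 * m) → Equiv.Perm (Fin n)) :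
    Summable (Wfun m n x σ) ∧
      (∑' t, Wfun m n x σ t) = ∏ j, Real.exp (∏ k, x k (σ k j)) := by
  have hval := pi_prod_summable_tsum n
    (fun j t => (∏ k, x k (σ k j)) ^ t / ((t.factorial : ℕ) : ℝ))
    (fun j t => by
      have h0 : 0 ≤ ∏ k, x k (σ k j) := Finset.prod_nonneg fun k _ => hnonneg k _
      positivity)
    (fun j => Real.summable_pow_div_factorial _)
  exact ⟨hval.1, hval.2.trans (Finset.prod_congr rfl fun j _ => exp_tsum _)⟩

lemma sum_pi_perm {ι : Type} [Fintype ι] [DecidableEq ι] {α : Type} [Fintype α]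
    [DecidableEq α] (f : ι → Equiv.Perm α → ℝ) :
    (∑ σ : ι → Equiv.Perm α, ∏ k, f k (σ k)) = ∏ k, ∑ τ, f k τ :=
  (Fintype.prod_sum f).symm

lemma GW (t : Fin n → ℕ) :
    (∑ σ : Fin (2 * m) → Equiv.Perm (Fin n),
      (∏ k, ((Equiv.Perm.sign (σ k) : ℤ) : ℝ)) * Wfun m n x σ t) = Gfun m n x t := by
  classical
  have hstep : ∀ σ : Fin (2 * m) → Equiv.Perm (Fin n),
      (∏ k, ((Equiv.Perm.sign (σ k) : ℤ) : ℝ)) * Wfun m n x σ t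
        = (∏ j, (((t j).factorial : ℕ) : ℝ))⁻¹ *
          ∏ k, (((Equiv.Perm.sign (σ k) : ℤ) : ℝ) * ∏ j, x k (σ k j) ^ t j) := by
    intro σ
    have h1 : (∏ j, (∏ k, x k (σ k j)) ^ t j) = ∏ k, ∏ j, x k (σ k j) ^ t j := by
      rw [Finset.prod_comm]
      exact Finset.prod_congr rfl fun j _ => (Finset.prod_pow _ _ _).symm
    have h2 : Wfun m n x σ t = (∏ j, (∏ k, x k (σ k j)) ^ t j) *
        (∏ j, (((t j).factorial : ℕ) : ℝ))⁻¹ := by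
      rw [Wfun, Finset.prod_div_distrib, div_eq_mul_inv]
    rw [h2, h1, Finset.prod_mul_distrib]
    ring
  rw [Finset.sum_congr rfl fun σ _ => hstep σ, ← Finset.mul_sum]
  rw [Gfun]
  congr 1
  rw [sum_pi_perm (fun k τ => ((Equiv.Perm.sign τ : ℤ) : ℝ) * ∏ j, x k (τ j) ^ t j)]
  refine Finset.prod_congr rfl fun k _ => ?_
  rw [Dmat, Matrix.det_apply']
  rfl

lemma Gsummable (hnonneg : ∀ k j, 0 ≤ x k j) : Summable (Gfun m n x) := by
  classical
  exact (summable_sum (f := fun σ t =>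
      (∏ k, ((Equiv.Perm.sign (σ k) : ℤ) : ℝ)) * Wfun m n x σ t)
    (fun σ _ => ((Wsum m n x hnonneg σ).1.mul_left _))).congr (GW m n x)

lemma HDG (hnonneg : ∀ k j, 0 ≤ x k j) :
    hyperDet m n (fun r => Real.exp (∏ k : Fin (2 * m), x k (r k)))
      = ((n.factorial : ℕ) : ℝ)⁻¹ * ∑' t, Gfun m n x t := by
  classical
  unfold hyperDet
  congr 1
  calc (∑ σ : Fin (2 * m) → Equiv.Perm (Fin n),
        (∏ k, ((Equiv.Perm.sign (σ k) : ℤ) : ℝ)) *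
          ∏ j, Real.exp (∏ k : Fin (2 * m), x k (σ k j)))
      = ∑ σ : Fin (2 * m) → Equiv.Perm (Fin n),
          ∑' t, (∏ k, ((Equiv.Perm.sign (σ k) : ℤ) : ℝ)) * Wfun m n x σ t := by
        refine Finset.sum_congr rfl fun σ _ => ?_
        rw [← (Wsum m n x hnonneg σ).2, tsum_mul_left]
    _ = ∑' t, ∑ σ : Fin (2 * m) → Equiv.Perm (Fin n),
          (∏ k, ((Equiv.Perm.sign (σ k) : ℤ) : ℝ)) * Wfun m n x σ t :=
        (Summable.tsum_finsetSum (fun σ _ => ((Wsum m n x hnonneg σ).1.mul_left _))).symm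
    _ = ∑' t, Gfun m n x t := tsum_congr (GW m n x)

lemma Gzero (hm : 0 < m) (t : Fin n → ℕ) (ht : ¬ Function.Injective t) :
    Gfun m n x t = 0 := by
  rw [Function.not_injective_iff] at ht
  obtain ⟨j, j', hjj', hne⟩ := ht
  rw [Gfun]
  have hdet0 : Dmat m n x ⟨0, by omega⟩ t = 0 := by
    rw [Dmat]
    exact Matrix.det_zero_of_column_eq hne (fun r => by simp [hjj'])
  rw [Finset.prod_eq_zero (Finset.mem_univ (⟨0, by omega⟩ : Fin (2 * m))) hdet0, mul_zero]

lemma Gperm (s : Fin n → ℕ) (τ : Equiv.Perm (Fin n)) :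
    Gfun m n x (fun j => s (τ j)) = Gfun m n x s := by
  rw [Gfun, Gfun]
  have hfact : (∏ j, (((s (τ j)).factorial : ℕ) : ℝ))
      = ∏ j, (((s j).factorial : ℕ) : ℝ) :=
    Equiv.prod_comp τ (fun j => (((s j).factorial : ℕ) : ℝ))
  have hDk : ∀ k, Dmat m n x k (fun j => s (τ j))
      = ((Equiv.Perm.sign τ : ℤ) : ℝ) * Dmat m n x k s := by
    intro k
    have hmat : (Matrix.of fun r j : Fin n => x k r ^ s (τ j))
        = (Matrix.of fun r j : Fin n => x k r ^ s j).submatrix id τ := by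
      ext r j
      simp [Matrix.submatrix_apply]
    rw [Dmat, Dmat, hmat, Matrix.det_permute']
  have hprod : (∏ k, Dmat m n x k fun j => s (τ j))
      = (((Equiv.Perm.sign τ : ℤ) : ℝ)) ^ (2 * m) * ∏ k, Dmat m n x k s := by
    calc (∏ k, Dmat m n x k fun j => s (τ j))
        = ∏ k : Fin (2 * m), (((Equiv.Perm.sign τ : ℤ) : ℝ) * Dmat m n x k s) :=
          Finset.prod_congr rfl fun k _ => hDk k
      _ = _ := by
          rw [Finset.prod_mul_distrib, Finset.prod_const, Finset.card_univ, Fintype.card_fin]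
  have hsgn : (((Equiv.Perm.sign τ : ℤ) : ℝ)) ^ (2 * m) = 1 := by
    rcases Int.units_eq_one_or (Equiv.Perm.sign τ) with h | h <;> rw [h]
    · norm_num
    · push_cast
      rw [pow_mul]
      norm_num
  rw [hfact, hprod, hsgn, one_mul]

/-- The reindexing map from (partition, permutation) pairs to injective tuples. -/
def PhiFun : {f : Fin n → ℕ // Antitone f} × Equiv.Perm (Fin n) →
    {t : Fin n → ℕ // Function.Injective t} :=
  fun p => ⟨fun j => sfun n p.1.1 (p.2 j),
    ((exponent_strictAnti p.1.1 p.1.2).injective.comp p.2.injective :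
      Function.Injective fun j => sfun n p.1.1 (p.2 j))⟩

lemma phi_bijective : Function.Bijective (PhiFun n) := by
  constructor
  · rintro ⟨⟨l, hl⟩, τ⟩ ⟨⟨l', hl'⟩, τ'⟩ hEq
    have hEq' : ∀ j, sfun n l (τ j) = sfun n l' (τ' j) :=
      fun j => congrFun (congrArg Subtype.val hEq) j
    have hs : StrictAnti (sfun n l) := exponent_strictAnti l hl
    have hs2 : StrictAnti (sfun n l') := exponent_strictAnti l' hl'
    have hss : sfun n l = sfun n l' := by
      refine strictAnti_comp_perm (τ.symm.trans τ') hs hs2 fun j => ?_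
      have h := hEq' (τ.symm j)
      simpa [Equiv.trans_apply, Equiv.apply_symm_apply] using h
    have hll : l = l' := by
      funext j
      have h := congrFun hss j
      simp only [sfun] at h
      omega
    have hττ : τ = τ' := by
      have hext : ∀ j, τ j = τ' j := by
        intro j
        have h2 : sfun n l (τ j) = sfun n l (τ' j) := by
          rw [hEq' j, hss]
        exact hs.injective h2
      exact Equiv.ext hext
    subst hll hττ
    rfl
  · rintro ⟨t, ht⟩
    set ρ : Equiv.Perm (Fin n) := Tuple.sort t with hρ
    have hmono : Monotone (t ∘ ρ) := Tuple.monotone_sort t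
    have hsm : StrictMono (t ∘ ρ) := hmono.strictMono_of_injective (ht.comp ρ.injective)
    set s : Fin n → ℕ := fun j => (t ∘ ρ) (Fin.rev j) with hs'
    have hs : StrictAnti s := fun i j hij => hsm (Fin.rev_lt_rev.mpr hij)
    have hge : ∀ j : Fin n, n - 1 - (j : ℕ) ≤ s j := fun j => strictAnti_fin_ge hs j
    set lam : Fin n → ℕ := fun j => s j - (n - 1 - (j : ℕ)) with hlam'
    have hlamanti : Antitone lam := by
      intro i j hij
      rcases eq_or_lt_of_le hij with heq | hlt
      · subst heq; exact le_refl _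
      · have hstep := strictAnti_fin_step hs ((j : ℕ) - (i : ℕ)) i j (by
          have h0 : (i : ℕ) < (j : ℕ) := hlt
          omega)
        have h1 := hge i
        have h2 := hge j
        have hi := i.isLt
        have hj := j.isLt
        have hij' : (i : ℕ) < (j : ℕ) := hlt
        simp only [hlam']
        omega
    refine ⟨⟨⟨lam, hlamanti⟩, ρ.symm.trans Fin.revPerm⟩, ?_⟩
    apply Subtype.ext
    funext j
    show sfun n lam ((ρ.symm.trans Fin.revPerm) j) = t j
    have happ : (ρ.symm.trans Fin.revPerm) j = Fin.rev (ρ.symm j) := rfl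
    rw [happ]
    have h1 : sfun n lam (Fin.rev (ρ.symm j)) = s (Fin.rev (ρ.symm j)) := by
      rw [sfun]
      exact Nat.sub_add_cancel (hge _)
    rw [h1]
    simp only [hs', Function.comp_apply, Fin.rev_rev]
    exact congrArg t (ρ.apply_symm_apply j)

set_option maxHeartbeats 1000000 in
lemma G_hasSum (hm : 0 < m) (hnonneg : ∀ k j, 0 ≤ x k j) :
    HasSum (fun lam : {f : Fin n → ℕ // Antitone f} =>
      ((n.factorial : ℕ) : ℝ) * Gfun m n x (sfun n lam.1)) (∑' t, Gfun m n x t) := by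
  classical
  set i : ({f : Fin n → ℕ // Antitone f} × Equiv.Perm (Fin n)) → (Fin n → ℕ) :=
    fun p => (PhiFun n p).1 with hi'
  have hinj : Function.Injective i := by
    intro p q hpq
    exact (phi_bijective n).1 (Subtype.ext hpq)
  have hzero : ∀ t ∉ Set.range i, Gfun m n x t = 0 := by
    intro t ht
    by_cases hinj2 : Function.Injective t
    · exfalso
      obtain ⟨p, hp⟩ := (phi_bijective n).2 ⟨t, hinj2⟩
      exact ht ⟨p, congrArg Subtype.val hp⟩
    · exact Gzero m n x hm t hinj2
  have hps : HasSum (Gfun m n x ∘ i) (∑' t, Gfun m n x t) :=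
    (hinj.hasSum_iff hzero).mpr (Gsummable m n x hnonneg).hasSum
  refine HasSum.prod_fiberwise hps ?_
  intro lam
  have h := hasSum_fintype (fun τ : Equiv.Perm (Fin n) => Gfun m n x (i (lam, τ)))
  have hval : (∑ τ : Equiv.Perm (Fin n), Gfun m n x (i (lam, τ)))
      = ((n.factorial : ℕ) : ℝ) * Gfun m n x (sfun n lam.1) := by
    have hcongr : (∑ τ : Equiv.Perm (Fin n), Gfun m n x (i (lam, τ)))
        = ∑ _τ : Equiv.Perm (Fin n), Gfun m n x (sfun n lam.1) :=
      Finset.sum_congr rfl fun τ _ => Gperm m n x (sfun n lam.1) τ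
    rw [hcongr, Finset.sum_const, Finset.card_univ, Fintype.card_perm, Fintype.card_fin,
      nsmul_eq_mul]
  rwa [hval] at h

end HyperAux

/-- For strictly decreasing vectors with nonnegative coordinates, the hyperdeterminant of the
array `exp(x_{1,r₁} ⋯ x_{2m,r_{2m}})` has a Schur-function expansion with nonnegative
summands whose sum is strictly positive; consequently the hyperdeterminant is strictly
positive. -/
theorem hyperDet_exp_schur_expansion_pos (m n : ℕ) (hm : 0 < m) (hn : 0 < n)
    (x : Fin (2 * m) → Fin n → ℝ) (hanti : ∀ k, StrictAnti (x k))
    (hnonneg : ∀ k j, 0 ≤ x k j) :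
    hyperDet m n (fun r => Real.exp (∏ k : Fin (2 * m), x k (r k))) =
      (∏ k : Fin (2 * m), vandermonde n (x k)) *
        (∑' lam : {f : Fin n → ℕ // Antitone f},
          (∏ j : Fin n, ((Nat.factorial (lam.1 j + (n - 1 - (j : ℕ))) : ℝ)))⁻¹ *
            ∏ k : Fin (2 * m), schur n lam.1 (x k)) ∧
    (∀ lam : {f : Fin n → ℕ // Antitone f},
      0 ≤ (∏ j : Fin n, ((Nat.factorial (lam.1 j + (n - 1 - (j : ℕ))) : ℝ)))⁻¹ *
            ∏ k : Fin (2 * m), schur n lam.1 (x k)) ∧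
    (0 < ∑' lam : {f : Fin n → ℕ // Antitone f},
          (∏ j : Fin n, ((Nat.factorial (lam.1 j + (n - 1 - (j : ℕ))) : ℝ)))⁻¹ *
            ∏ k : Fin (2 * m), schur n lam.1 (x k)) ∧
    0 < hyperDet m n (fun r => Real.exp (∏ k : Fin (2 * m), x k (r k))) := by
  classical
  have hnfact : ((n.factorial : ℕ) : ℝ) ≠ 0 :=
    Nat.cast_ne_zero.mpr (Nat.factorial_ne_zero n)
  have hVpos : 0 < ∏ k : Fin (2 * m), vandermonde n (x k) :=
    Finset.prod_pos fun k _ => vandermonde_pos _ (hanti k)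
  have h4 : ∀ lam : {f : Fin n → ℕ // Antitone f},
      Gfun m n x (sfun n lam.1)
        = (∏ k : Fin (2 * m), vandermonde n (x k)) *
          ((∏ j : Fin n, ((Nat.factorial (lam.1 j + (n - 1 - (j : ℕ))) : ℝ)))⁻¹ *
            ∏ k : Fin (2 * m), schur n lam.1 (x k)) := by
    intro lam
    rw [Gfun]
    have hDk : ∀ k, Dmat m n x k (sfun n lam.1)
        = schur n lam.1 (x k) * vandermonde n (x k) := by
      intro k
      have hcast : Dmat m n x k (sfun n lam.1)
          = Matrix.det (Matrix.of fun r s : Fin n => x k r ^ (lam.1 s + (n - 1 - (s : ℕ)))) := rfl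
      rw [hcast, schur, div_mul_cancel₀]
      exact (vandermonde_pos _ (hanti k)).ne'
    rw [Finset.prod_congr rfl fun k _ => hDk k, Finset.prod_mul_distrib]
    have hco : (∏ j, ((((sfun n lam.1) j).factorial : ℕ) : ℝ))
        = ∏ j : Fin n, ((Nat.factorial (lam.1 j + (n - 1 - (j : ℕ))) : ℝ)) := rfl
    rw [hco]
    ring
  have hGsfun := G_hasSum m n x hm hnonneg
  have hTargetHasSum : HasSum (fun lam : {f : Fin n → ℕ // Antitone f} =>
      (∏ j : Fin n, ((Nat.factorial (lam.1 j + (n - 1 - (j : ℕ))) : ℝ)))⁻¹ *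
        ∏ k : Fin (2 * m), schur n lam.1 (x k))
      ((((n.factorial : ℕ) : ℝ)⁻¹ * (∏ k : Fin (2 * m), vandermonde n (x k))⁻¹) *
        ∑' t, Gfun m n x t) := by
    have hh := hGsfun.mul_left
      (((n.factorial : ℕ) : ℝ)⁻¹ * (∏ k : Fin (2 * m), vandermonde n (x k))⁻¹)
    have heq : (fun lam : {f : Fin n → ℕ // Antitone f} =>
        (((n.factorial : ℕ) : ℝ)⁻¹ * (∏ k : Fin (2 * m), vandermonde n (x k))⁻¹) *
          (((n.factorial : ℕ) : ℝ) * Gfun m n x (sfun n lam.1)))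
        = (fun lam : {f : Fin n → ℕ // Antitone f} =>
            (∏ j : Fin n, ((Nat.factorial (lam.1 j + (n - 1 - (j : ℕ))) : ℝ)))⁻¹ *
              ∏ k : Fin (2 * m), schur n lam.1 (x k)) := by
      funext lam
      rw [h4 lam]
      set a := ((n.factorial : ℕ) : ℝ) with ha
      set b := ∏ k : Fin (2 * m), vandermonde n (x k) with hb
      set c := (∏ j : Fin n, ((Nat.factorial (lam.1 j + (n - 1 - (j : ℕ))) : ℝ)))⁻¹ *
        ∏ k : Fin (2 * m), schur n lam.1 (x k) with hc
      calc (a⁻¹ * b⁻¹) * (a * (b * c)) = (a⁻¹ * a) * ((b⁻¹ * b) * c) := by ring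
        _ = c := by rw [inv_mul_cancel₀ hnfact, inv_mul_cancel₀ hVpos.ne', one_mul, one_mul]
    rwa [heq] at hh
  have hIdent : hyperDet m n (fun r => Real.exp (∏ k : Fin (2 * m), x k (r k)))
      = (∏ k : Fin (2 * m), vandermonde n (x k)) *
        (∑' lam : {f : Fin n → ℕ // Antitone f},
          (∏ j : Fin n, ((Nat.factorial (lam.1 j + (n - 1 - (j : ℕ))) : ℝ)))⁻¹ *
            ∏ k : Fin (2 * m), schur n lam.1 (x k)) := by
    rw [HDG m n x hnonneg, hTargetHasSum.tsum_eq]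
    have hc : (∏ k : Fin (2 * m), vandermonde n (x k)) *
        ((((n.factorial : ℕ) : ℝ)⁻¹ * (∏ k : Fin (2 * m), vandermonde n (x k))⁻¹) *
          (∑' t, Gfun m n x t))
        = ((∏ k : Fin (2 * m), vandermonde n (x k)) *
            (∏ k : Fin (2 * m), vandermonde n (x k))⁻¹) *
          (((n.factorial : ℕ) : ℝ)⁻¹ * (∑' t, Gfun m n x t)) := by ring
    rw [hc, mul_inv_cancel₀ hVpos.ne', one_mul]
  have hconj2 : ∀ lam : {f : Fin n → ℕ // Antitone f},
      0 ≤ (∏ j : Fin n, ((Nat.factorial (lam.1 j + (n - 1 - (j : ℕ))) : ℝ)))⁻¹ *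
            ∏ k : Fin (2 * m), schur n lam.1 (x k) := by
    intro lam
    apply mul_nonneg
    · refine inv_nonneg.mpr (Finset.prod_nonneg fun j _ => ?_)
      positivity
    · exact Finset.prod_nonneg fun k _ =>
        schur_nonneg lam.1 lam.2 (x k) (hanti k) (fun r => hnonneg k r)
  have hconj3 : 0 < ∑' lam : {f : Fin n → ℕ // Antitone f},
      (∏ j : Fin n, ((Nat.factorial (lam.1 j + (n - 1 - (j : ℕ))) : ℝ)))⁻¹ *
        ∏ k : Fin (2 * m), schur n lam.1 (x k) := by
    refine Summable.tsum_pos hTargetHasSum.summable hconj2 ⟨fun _ => 0, antitone_const⟩ ?_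
    apply mul_pos
    · refine inv_pos.mpr (Finset.prod_pos fun j _ => ?_)
      exact_mod_cast Nat.factorial_pos _
    · have hone : ∀ k : Fin (2 * m), schur n (fun _ : Fin n => 0) (x k) = 1 :=
        fun k => schur_zero (x k) (hanti k)
      rw [Finset.prod_congr rfl fun k _ => hone k]
      simp
  refine ⟨hIdent, hconj2, hconj3, ?_⟩
  rw [hIdent]
  exact mul_pos hVpos hconj3
end
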